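/- The ideal (P₂, **P₂**) of absolutely 2-summing operators satisfies the P₂-extension property: for every ε > 0, every isometric embedding J : E → G of Banach spaces, and every absolutely 2-summing operator T : E → F, there exists an absolutely 2-summing operator T̃ : G → F with T = T̃ ∘ J and π₂(T̃) ≤ (1+ε)·π₂(T). -/

import Mathlib

noncomputable section

/-- `T` is absolutely 2-summing with constant `c`. -/
def TwoSummingWith {E F : Type*} [NormedAddCommGroup E] [NormedSpace ℝ E]
    [NormedAddCommGroup F] [NormedSpace ℝ F] (T : E →L[ℝ] F) (c : ℝ) : Prop :=
  0 ≤ c ∧ ∀ (n : ℕ) (x : Fin n → E),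
    ∑ i, ‖T (x i)‖ ^ 2 ≤
      c ^ 2 * sSup { s : ℝ | ∃ a : StrongDual ℝ E, ‖a‖ ≤ 1 ∧
        s = ∑ i, (a (x i)) ^ 2 }

/-- `T` is absolutely 2-summing. -/
def AbsTwoSumming {E F : Type*} [NormedAddCommGroup E] [NormedSpace ℝ E]
    [NormedAddCommGroup F] [NormedSpace ℝ F] (T : E →L[ℝ] F) : Prop :=
  ∃ c : ℝ, TwoSummingWith T c

/-- The 2-summing norm `π₂`. -/
noncomputable def pi2 {E F : Type*} [NormedAddCommGroup E] [NormedSpace ℝ E]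
    [NormedAddCommGroup F] [NormedSpace ℝ F] (T : E →L[ℝ] F) : ℝ :=
  sInf { c : ℝ | TwoSummingWith T c }
noncomputable section

open Filter Topology BoundedContinuousFunction NormedSpace

namespace TwoSummingAux

variable {E : Type*} [NormedAddCommGroup E] [NormedSpace ℝ E]

/-- The dual unit ball, equipped with the **discrete** topology. -/
def Ball (E : Type*) [NormedAddCommGroup E] [NormedSpace ℝ E] : Type _ :=
  {a : StrongDual ℝ E // ‖a‖ ≤ 1}

instance : TopologicalSpace (Ball E) := ⊥
instance : DiscreteTopology (Ball E) := ⟨rfl⟩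
instance : Nonempty (Ball E) := ⟨⟨0, by simp⟩⟩

/-- sup of a bounded function -/
def supF (f : Ball E →ᵇ ℝ) : ℝ := ⨆ a, f a

lemma bddAbove_rangeF (f : Ball E →ᵇ ℝ) : BddAbove (Set.range f) := by
  refine ⟨‖f‖, ?_⟩
  rintro _ ⟨a, rfl⟩
  exact (le_abs_self _).trans ((Real.norm_eq_abs _) ▸ f.norm_coe_le_norm a)

lemma supF_le {f : Ball E →ᵇ ℝ} {M : ℝ} (h : ∀ a, f a ≤ M) : supF f ≤ M := ciSup_le h

lemma le_supF (f : Ball E →ᵇ ℝ) (a : Ball E) : f a ≤ supF f := le_ciSup (bddAbove_rangeF f) a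

lemma supF_neg_norm (f : Ball E →ᵇ ℝ) : -‖f‖ ≤ supF f := by
  refine le_trans ?_ (le_supF f (Classical.arbitrary _))
  have := (f.norm_coe_le_norm (Classical.arbitrary _))
  rw [Real.norm_eq_abs, abs_le] at this
  exact this.1

lemma supF_add_le (f g : Ball E →ᵇ ℝ) : supF (f + g) ≤ supF f + supF g :=
  ciSup_le fun a => add_le_add (le_supF f a) (le_supF g a)

lemma supF_const (r : ℝ) : supF (const (Ball E) r) = r := ciSup_const

lemma supF_smul (t : ℝ) (ht : 0 ≤ t) (f : Ball E →ᵇ ℝ) : supF (t • f) = t * supF f := by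
  rw [supF, supF, Real.mul_iSup_of_nonneg ht]
  exact iSup_congr fun a => by simp [mul_comm]

section Cone

variable {F : Type*} [NormedAddCommGroup F] [NormedSpace ℝ F]
variable (T : E →L[ℝ] F) (c : ℝ)

/-- squares of a finite family, as a bounded function on the ball -/
def sqB {n : ℕ} (x : Fin n → E) : Ball E →ᵇ ℝ :=
  ofNormedAddCommGroupDiscrete (fun a => ∑ i, (a.1 (x i))^2) (∑ i, ‖x i‖^2) (by
    intro a
    rw [Real.norm_eq_abs, abs_of_nonneg (Finset.sum_nonneg fun i _ => sq_nonneg _)]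
    refine Finset.sum_le_sum fun i _ => ?_
    have h1 : |a.1 (x i)| ≤ ‖x i‖ := by
      calc |a.1 (x i)| ≤ ‖a.1‖ * ‖x i‖ := a.1.le_opNorm _
        _ ≤ 1 * ‖x i‖ := by gcongr; exact a.2
        _ = ‖x i‖ := one_mul _
    calc (a.1 (x i))^2 = |a.1 (x i)|^2 := (sq_abs _).symm
      _ ≤ ‖x i‖^2 := pow_le_pow_left₀ (abs_nonneg _) h1 2)

@[simp] lemma sqB_apply {n : ℕ} (x : Fin n → E) (a : Ball E) :
    sqB x a = ∑ i, (a.1 (x i))^2 := rfl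

/-- the cone functions `a ↦ c² ∑ (a xᵢ)² - ∑ ‖T xᵢ‖²` -/
def coneFun {n : ℕ} (x : Fin n → E) : Ball E →ᵇ ℝ :=
  c^2 • sqB x - const _ (∑ i, ‖T (x i)‖^2)

@[simp] lemma coneFun_apply {n : ℕ} (x : Fin n → E) (a : Ball E) :
    coneFun T c x a = c^2 * ∑ i, (a.1 (x i))^2 - ∑ i, ‖T (x i)‖^2 := rfl

lemma coneFun_zero : coneFun T c (Fin.elim0 : Fin 0 → E) = 0 := by
  apply BoundedContinuousFunction.ext
  intro a
  rw [coneFun_apply]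
  have : (0 : Ball E →ᵇ ℝ) a = 0 := rfl
  rw [this]
  simp

lemma coneFun_append {n m : ℕ} (x : Fin n → E) (y : Fin m → E) :
    coneFun T c (Fin.append x y) = coneFun T c x + coneFun T c y := by
  ext a
  simp only [coneFun_apply, coe_add, Pi.add_apply]
  rw [Fin.sum_univ_add, Fin.sum_univ_add]
  simp only [Fin.append_left, Fin.append_right]
  ring

lemma coneFun_smul (t : ℝ) (ht : 0 ≤ t) {n : ℕ} (x : Fin n → E) :
    t • coneFun T c x = coneFun T c (fun i => Real.sqrt t • x i) := by
  ext a
  show t * (c^2 * ∑ i, (a.1 (x i))^2 - ∑ i, ‖T (x i)‖^2)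
      = c^2 * ∑ i, (a.1 (Real.sqrt t • x i))^2 - ∑ i, ‖T (Real.sqrt t • x i)‖^2
  have h1 : ∀ i, (a.1 (Real.sqrt t • x i))^2 = t * (a.1 (x i))^2 := by
    intro i
    rw [map_smul, smul_eq_mul, mul_pow, Real.sq_sqrt ht]
  have h2 : ∀ i, ‖T (Real.sqrt t • x i)‖^2 = t * ‖T (x i)‖^2 := by
    intro i
    rw [map_smul, norm_smul, Real.norm_eq_abs, abs_of_nonneg (Real.sqrt_nonneg t), mul_pow,
      Real.sq_sqrt ht]
  simp only [h1, h2, ← Finset.mul_sum]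
  ring

/-- the key positivity from `TwoSummingWith` -/
lemma supF_coneFun_nonneg (hT : TwoSummingWith T c) {n : ℕ} (x : Fin n → E) :
    0 ≤ supF (coneFun T c x) := by
  have hset : { s : ℝ | ∃ a : StrongDual ℝ E, ‖a‖ ≤ 1 ∧ s = ∑ i, (a (x i)) ^ 2 }
      = Set.range (fun a : Ball E => ∑ i, (a.1 (x i))^2) := by
    ext s
    constructor
    · rintro ⟨a, ha, rfl⟩; exact ⟨⟨a, ha⟩, rfl⟩
    · rintro ⟨a, rfl⟩; exact ⟨a.1, a.2, rfl⟩
  have hkey := hT.2 n x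
  rw [hset] at hkey
  have hkey2 : ∑ i, ‖T (x i)‖ ^ 2 ≤ c^2 * ⨆ a : Ball E, ∑ i, (a.1 (x i))^2 := hkey
  rw [Real.mul_iSup_of_nonneg (sq_nonneg c)] at hkey2
  have h1 : (⨆ a : Ball E, c^2 * ∑ i, (a.1 (x i))^2)
      ≤ supF (coneFun T c x) + ∑ i, ‖T (x i)‖^2 := by
    refine ciSup_le fun a => ?_
    have := le_supF (coneFun T c x) a
    rw [coneFun_apply] at this
    linarith
  linarith

end Cone

section Q
open Pointwise

variable {F : Type*} [NormedAddCommGroup F] [NormedSpace ℝ F]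
variable (T : E →L[ℝ] F) (c : ℝ)

/-- the set whose infimum defines the sublinear functional `qF` -/
def qSet (f : Ball E →ᵇ ℝ) : Set ℝ :=
  { r | ∃ (n : ℕ) (x : Fin n → E), r = supF (f + coneFun T c x) }

lemma qSet_nonempty (f : Ball E →ᵇ ℝ) : (qSet T c f).Nonempty :=
  ⟨supF (f + coneFun T c Fin.elim0), 0, Fin.elim0, rfl⟩

lemma qSet_bddBelow (hT : TwoSummingWith T c) (f : Ball E →ᵇ ℝ) :
    ∀ r ∈ qSet T c f, -‖f‖ ≤ r := by
  rintro r ⟨n, x, rfl⟩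
  have h0 : 0 ≤ supF (coneFun T c x) := supF_coneFun_nonneg T c hT x
  have h1 : supF (coneFun T c x) ≤ supF (f + coneFun T c x) + ‖f‖ := by
    refine supF_le fun a => ?_
    have hfa : -‖f‖ ≤ f a := by
      have := f.norm_coe_le_norm a
      rw [Real.norm_eq_abs, abs_le] at this
      exact this.1
    have := le_supF (f + coneFun T c x) a
    simp only [coe_add, Pi.add_apply] at this
    linarith
  linarith

/-- the sublinear functional -/
def qF (f : Ball E →ᵇ ℝ) : ℝ := sInf (qSet T c f)

lemma qF_le (f : Ball E →ᵇ ℝ) {n : ℕ} (x : Fin n → E) (hT : TwoSummingWith T c) :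
    qF T c f ≤ supF (f + coneFun T c x) :=
  csInf_le ⟨-‖f‖, qSet_bddBelow T c hT f⟩ ⟨n, x, rfl⟩

lemma qF_le_supF (hT : TwoSummingWith T c) (f : Ball E →ᵇ ℝ) : qF T c f ≤ supF f := by
  have := qF_le T c f Fin.elim0 hT
  rwa [coneFun_zero, add_zero] at this

lemma qF_add (hT : TwoSummingWith T c) (f g : Ball E →ᵇ ℝ) :
    qF T c (f + g) ≤ qF T c f + qF T c g := by
  refine le_of_forall_pos_le_add fun δ hδ => ?_
  obtain ⟨r₁, ⟨n₁, x₁, rfl⟩, hr₁⟩ :=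
    Real.lt_sInf_add_pos (qSet_nonempty T c f) (half_pos hδ)
  obtain ⟨r₂, ⟨n₂, x₂, rfl⟩, hr₂⟩ :=
    Real.lt_sInf_add_pos (qSet_nonempty T c g) (half_pos hδ)
  have hmem : qF T c (f + g) ≤ supF ((f + g) + coneFun T c (Fin.append x₁ x₂)) := by
    exact qF_le T c (f + g) (Fin.append x₁ x₂) hT
  rw [coneFun_append] at hmem
  have harr : (f + g) + (coneFun T c x₁ + coneFun T c x₂)
      = (f + coneFun T c x₁) + (g + coneFun T c x₂) := by abel
  rw [harr] at hmem
  have := supF_add_le (f + coneFun T c x₁) (g + coneFun T c x₂)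
  have hr₁' : supF (f + coneFun T c x₁) < qF T c f + δ / 2 := hr₁
  have hr₂' : supF (g + coneFun T c x₂) < qF T c g + δ / 2 := hr₂
  linarith [hmem, this, hr₁', hr₂']

lemma qF_smul (hT : TwoSummingWith T c) (t : ℝ) (ht : 0 < t) (f : Ball E →ᵇ ℝ) :
    qF T c (t • f) = t * qF T c f := by
  have hset : qSet T c (t • f) = (fun r => t * r) '' qSet T c f := by
    ext r
    constructor
    · rintro ⟨n, x, rfl⟩
      refine ⟨supF (f + coneFun T c (fun i => (Real.sqrt t)⁻¹ • x i)), ⟨n, _, rfl⟩, ?_⟩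
      show t * supF (f + coneFun T c (fun i => (Real.sqrt t)⁻¹ • x i))
          = supF (t • f + coneFun T c x)
      rw [← supF_smul t ht.le, smul_add, coneFun_smul T c t ht.le]
      have hxx : (fun i => Real.sqrt t • (Real.sqrt t)⁻¹ • x i) = x := by
        funext i
        rw [smul_smul, mul_inv_cancel₀ (by positivity : Real.sqrt t ≠ 0), one_smul]
      rw [hxx]
    · rintro ⟨r', ⟨n, x, rfl⟩, rfl⟩
      refine ⟨n, fun i => Real.sqrt t • x i, ?_⟩
      show t * supF (f + coneFun T c x)
          = supF (t • f + coneFun T c fun i => Real.sqrt t • x i)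
      rw [← supF_smul t ht.le, smul_add, coneFun_smul T c t ht.le]
  rw [qF, qF, hset]
  have : (fun r => t * r) '' qSet T c f = t • qSet T c f := by
    ext r; simp [Set.mem_smul_set, smul_eq_mul]
  rw [this, Real.sInf_smul_of_nonneg ht.le, smul_eq_mul]

/-- Existence of the Pietsch mean `φ`. -/
lemma exists_phi (hT : TwoSummingWith T c) :
    ∃ φ : (Ball E →ᵇ ℝ) →ₗ[ℝ] ℝ, (∀ f, φ f ≤ supF f) ∧ φ (const _ 1) = 1 ∧
      (∀ {n : ℕ} (x : Fin n → E), 0 ≤ φ (coneFun T c x)) := by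
  obtain ⟨φ, -, hφ⟩ := exists_extension_of_le_sublinear
    ⟨(⊥ : Submodule ℝ (Ball E →ᵇ ℝ)), 0⟩ (qF T c)
    (fun t ht f => qF_smul T c hT t ht f)
    (fun f g => qF_add T c hT f g)
    (by
      rintro ⟨x, hx⟩
      simp only [Submodule.mem_bot] at hx
      subst hx
      show (0:ℝ) ≤ qF T c 0
      refine le_csInf (qSet_nonempty T c 0) ?_
      rintro r ⟨n, x, rfl⟩
      rw [zero_add]
      exact supF_coneFun_nonneg T c hT x)
  have hφ_sup : ∀ f, φ f ≤ supF f := fun f => (hφ f).trans (qF_le_supF T c hT f)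
  refine ⟨φ, hφ_sup, ?_, ?_⟩
  · have h1 : φ (const _ 1) ≤ 1 := by
      have := hφ_sup (const _ 1); rwa [supF_const] at this
    have h2 : φ (-const _ 1) ≤ -1 := by
      have := hφ_sup (-const _ 1)
      have hc : -(const (Ball E) 1) = const _ (-1 : ℝ) := by
        apply BoundedContinuousFunction.ext; intro a; rfl
      rwa [hc, supF_const] at this
    rw [map_neg] at h2
    linarith
  · intro n x
    have : φ (-(coneFun T c x)) ≤ qF T c (-(coneFun T c x)) := hφ _
    have h2 : qF T c (-(coneFun T c x)) ≤ supF (-(coneFun T c x) + coneFun T c x) :=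
      qF_le T c _ x hT
    rw [neg_add_cancel] at h2
    have h3 : supF (0 : Ball E →ᵇ ℝ) = 0 := by
      have : (0 : Ball E →ᵇ ℝ) = const _ (0:ℝ) := rfl
      rw [this, supF_const]
    rw [map_neg] at this
    linarith

end Q

section Sigma

variable {G : Type*} [NormedAddCommGroup G] [NormedSpace ℝ G]

/-- Hahn–Banach section: every functional in the dual ball of `E` extends through an
isometric embedding `J : E → G` to a functional in the dual ball of `G`. -/
lemma exists_section (J : E →L[ℝ] G) (hJ : Isometry J) (a : Ball E) :
    ∃ b : StrongDual ℝ G, ‖b‖ ≤ 1 ∧ ∀ x : E, b (J x) = a.1 x := by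
  have hinj : Function.Injective J := hJ.injective
  have hnorm : ∀ x : E, ‖J x‖ = ‖x‖ := fun x =>
    hJ.norm_map_of_map_zero (map_zero J) x
  set p : Submodule ℝ G := LinearMap.range (J : E →ₗ[ℝ] G) with hp
  let e : E ≃ₗ[ℝ] p := LinearEquiv.ofInjective (J : E →ₗ[ℝ] G) hinj
  have he : ∀ v : p, J (e.symm v) = (v : G) := by
    intro v
    have : (e (e.symm v) : G) = (v : G) := by rw [e.apply_symm_apply]
    rwa [LinearEquiv.ofInjective_apply] at this
  let f₀ : p →ₗ[ℝ] ℝ := (a.1 : E →ₗ[ℝ] ℝ).comp (e.symm : p →ₗ[ℝ] E)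
  have hf₀ : ∀ v : p, ‖f₀ v‖ ≤ ‖a.1‖ * ‖v‖ := by
    intro v
    have h1 : ‖f₀ v‖ ≤ ‖a.1‖ * ‖e.symm v‖ := a.1.le_opNorm _
    have h2 : ‖e.symm v‖ = ‖v‖ := by
      rw [← hnorm (e.symm v), he v]
      rfl
    rwa [h2] at h1
  let f : p →L[ℝ] ℝ := LinearMap.mkContinuous f₀ ‖a.1‖ hf₀
  obtain ⟨g, hg, hgnorm⟩ := exists_extension_norm_eq p f
  refine ⟨g, ?_, ?_⟩
  · rw [hgnorm]
    exact (LinearMap.mkContinuous_norm_le f₀ (norm_nonneg _) hf₀).trans a.2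
  · intro x
    have hmem : J x ∈ p := ⟨x, rfl⟩
    have := hg ⟨J x, hmem⟩
    rw [this]
    show f₀ ⟨J x, hmem⟩ = a.1 x
    have hsymm : e.symm ⟨J x, hmem⟩ = x := by
      apply hinj
      rw [he ⟨J x, hmem⟩]
    show a.1 (e.symm ⟨J x, hmem⟩) = a.1 x
    rw [hsymm]

end Sigma

section Core

open Real

variable {G : Type*} [NormedAddCommGroup G] [NormedSpace ℝ G]
variable {F : Type*} [NormedAddCommGroup F] [NormedSpace ℝ F]

/-- `x` is a "good approximating sequence" for `y` w.r.t. the semi-inner-product `β`. -/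
def IsGood (J : E →L[ℝ] G) (β : G → G → ℝ) (y : G) (x : ℕ → E) (ε : ℕ → ℝ) : Prop :=
  (∀ n, 0 ≤ ε n) ∧ Filter.Tendsto ε Filter.atTop (nhds 0) ∧
    ∀ (n : ℕ) (z : E), |β (y - J (x n)) (J z)| ≤ ε n * Real.sqrt (β (J z) (J z))

/-- The core construction: given a positive semidefinite bilinear form dominating `T`
and dominated by the weak 2-sums, the operator extends. -/
lemma core [CompleteSpace F] (J : E →L[ℝ] G) (T : E →L[ℝ] F) (c : ℝ) (hc : 0 ≤ c)
    (β : G → G → ℝ)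
    (hadd : ∀ y₁ y₂ z, β (y₁ + y₂) z = β y₁ z + β y₂ z)
    (hsmul : ∀ (t : ℝ) (y z), β (t • y) z = t * β y z)
    (hsymm : ∀ y z, β y z = β z y)
    (hpos : ∀ y, 0 ≤ β y y)
    (hnorm : ∀ y, β y y ≤ ‖y‖^2)
    (hdom : ∀ x : E, ‖T x‖^2 ≤ c^2 * β (J x) (J x))
    (hsum : ∀ (n : ℕ) (y : Fin n → G), ∑ i, β (y i) (y i) ≤
      sSup { s : ℝ | ∃ b : StrongDual ℝ G, ‖b‖ ≤ 1 ∧ s = ∑ i, (b (y i))^2 }) :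
    ∃ Tt : G →L[ℝ] F, TwoSummingWith Tt c ∧ ∀ x : E, T x = Tt (J x) := by
  -- derived bilinearity facts
  have haddr : ∀ y z₁ z₂, β y (z₁ + z₂) = β y z₁ + β y z₂ := fun y z₁ z₂ => by
    rw [hsymm, hadd, hsymm z₁ y, hsymm z₂ y]
  have hsmulr : ∀ (t : ℝ) (y z), β y (t • z) = t * β y z := fun t y z => by
    rw [hsymm, hsmul, hsymm z y]
  have hsub : ∀ y₁ y₂ z, β (y₁ - y₂) z = β y₁ z - β y₂ z := fun y₁ y₂ z => by
    rw [sub_eq_add_neg, hadd, ← neg_one_smul ℝ y₂, hsmul]; ring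
  have hsubr : ∀ y z₁ z₂, β y (z₁ - z₂) = β y z₁ - β y z₂ := fun y z₁ z₂ => by
    rw [hsymm, hsub, hsymm z₁ y, hsymm z₂ y]
  have hzero : ∀ z, β 0 z = 0 := fun z => by
    rw [← zero_smul ℝ (0 : G), hsmul]; ring
  have hexp : ∀ (t : ℝ) (y z : G), β (y + t • z) (y + t • z)
      = β y y + 2 * t * β y z + t^2 * β z z := by
    intro t y z
    simp only [hadd, haddr, hsmul, hsmulr]
    rw [hsymm z y]; ring
  -- Cauchy–Schwarz
  have hcs : ∀ y z, (β y z)^2 ≤ β y y * β z z := by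
    intro y z
    have key : ∀ t : ℝ, 0 ≤ β z z * (t * t) + (2 * β y z) * t + β y y := by
      intro t
      have := hpos (y + t • z)
      rw [hexp t y z] at this
      nlinarith [this]
    have hd := discrim_le_zero key
    rw [discrim] at hd
    nlinarith [hd]
  -- seminorm facts; `nb y = sqrt (β y y)`
  set nb : G → ℝ := fun y => Real.sqrt (β y y) with hnb
  have hnb_nonneg : ∀ y, 0 ≤ nb y := fun y => Real.sqrt_nonneg _
  have hnb_sq : ∀ y, nb y ^ 2 = β y y := fun y => Real.sq_sqrt (hpos y)
  have habs_cs : ∀ y z, |β y z| ≤ nb y * nb z := by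
    intro y z
    have h1 : |β y z| = Real.sqrt ((β y z)^2) := (Real.sqrt_sq_eq_abs _).symm
    rw [h1, hnb, ← Real.sqrt_mul (hpos y)]
    exact Real.sqrt_le_sqrt (hcs y z)
  have hnb_le : ∀ y, nb y ≤ ‖y‖ := by
    intro y
    have := Real.sqrt_le_sqrt (hnorm y)
    rwa [Real.sqrt_sq (norm_nonneg y)] at this
  have hTle : ∀ x : E, ‖T x‖ ≤ c * nb (J x) := by
    intro x
    have h1 : ‖T x‖ = Real.sqrt (‖T x‖^2) := (Real.sqrt_sq (norm_nonneg _)).symm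
    rw [h1]
    have := Real.sqrt_le_sqrt (hdom x)
    rwa [Real.sqrt_mul (sq_nonneg c), Real.sqrt_sq hc] at this
  have hTdiff : ∀ x x' : E, ‖T x - T x'‖ ≤ c * nb (J x - J x') := by
    intro x x'
    have := hTle (x - x')
    rwa [map_sub, map_sub] at this
  -- cancellation helper
  have hcancel : ∀ (y : G) (M : ℝ), β y y ≤ M * nb y → 0 ≤ M → nb y ≤ M := by
    intro y M h hM
    rcases eq_or_lt_of_le (hnb_nonneg y) with h0 | h0
    · rw [← h0]; exact hM
    · have h2 : nb y * nb y ≤ M * nb y := by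
        have h3 := h
        rw [← hnb_sq y, sq] at h3
        exact h3
      exact le_of_mul_le_mul_right h2 h0
  have hnegr : ∀ (y z : G), β y (-z) = -β y z := fun y z => by
    rw [← neg_one_smul ℝ z, hsmulr]; ring
  -- existence of good sequences
  have hGoodExists : ∀ y : G, ∃ (x : ℕ → E) (ε : ℕ → ℝ), IsGood J β y x ε := by
    intro y
    set S : Set ℝ := {r : ℝ | ∃ x : E, r = nb (y - J x)} with hS
    have hSne : S.Nonempty := ⟨nb (y - J 0), 0, rfl⟩
    have hSbd : ∀ r ∈ S, (0:ℝ) ≤ r := by rintro r ⟨x, rfl⟩; exact hnb_nonneg _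
    set D := sInf S with hD
    have hD0 : 0 ≤ D := le_csInf hSne hSbd
    have hDle : ∀ x : E, D ≤ nb (y - J x) := fun x => csInf_le ⟨0, hSbd⟩ ⟨x, rfl⟩
    have hsel : ∀ n : ℕ, ∃ x : E, nb (y - J x) < D + 1/((n:ℝ)+1) := by
      intro n
      obtain ⟨r, hr, hlt⟩ := Real.lt_sInf_add_pos hSne
        (by positivity : (0:ℝ) < 1/((n:ℝ)+1))
      obtain ⟨x, rfl⟩ := hr
      exact ⟨x, hlt⟩
    choose x hx using hsel
    refine ⟨x, fun n => Real.sqrt ((D + 1/((n:ℝ)+1))^2 - D^2),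
      fun n => Real.sqrt_nonneg _, ?_, ?_⟩
    · have h1 : Filter.Tendsto (fun n : ℕ => 1/((n:ℝ)+1)) Filter.atTop (nhds 0) :=
        tendsto_one_div_add_atTop_nhds_zero_nat
      have h2 : Filter.Tendsto (fun n : ℕ => (D + 1/((n:ℝ)+1))^2 - D^2) Filter.atTop
          (nhds ((D + 0)^2 - D^2)) := ((h1.const_add D).pow 2).sub_const _
      have h3 : ((D + 0)^2 - D^2 : ℝ) = 0 := by ring
      rw [h3] at h2
      have h4 := (Real.continuous_sqrt.tendsto 0).comp h2
      rwa [Real.sqrt_zero] at h4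
    · intro n z
      set u := y - J (x n) with hu
      set A := β (J z) (J z) with hA
      set b := β u (J z) with hb
      set δ := (D + 1/((n:ℝ)+1))^2 - D^2 with hδ
      have hδ0 : 0 ≤ δ := by
        have h5 : D ≤ D + 1/((n:ℝ)+1) := le_add_of_nonneg_right (by positivity)
        have := pow_le_pow_left₀ hD0 h5 2
        rw [hδ]; linarith
      have key : ∀ t : ℝ, 0 ≤ A * (t*t) + (2*b) * t + δ := by
        intro t
        have h5 : y - J (x n + (-t) • z) = u + t • J z := by
          rw [map_add, map_smul, hu]
          rw [neg_smul]
          abel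
        have h6 := hDle (x n + (-t) • z)
        have h7 : D^2 ≤ β (y - J (x n + (-t) • z)) (y - J (x n + (-t) • z)) := by
          rw [← hnb_sq]
          exact pow_le_pow_left₀ hD0 h6 2
        rw [h5, hexp] at h7
        have h10 : β u u ≤ (D + 1/((n:ℝ)+1))^2 := by
          rw [← hnb_sq]
          exact pow_le_pow_left₀ (hnb_nonneg u) (le_of_lt (hx n)) 2
        rw [hδ]
        nlinarith [h7, h10]
      have hd := discrim_le_zero key
      rw [discrim] at hd
      have hb2 : b^2 ≤ δ * A := by nlinarith [hd]
      have h11 : |b| = Real.sqrt (b^2) := (Real.sqrt_sq_eq_abs _).symm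
      rw [h11]
      calc Real.sqrt (b^2) ≤ Real.sqrt (δ * A) := Real.sqrt_le_sqrt hb2
        _ = Real.sqrt δ * Real.sqrt A := Real.sqrt_mul hδ0 _
  -- mixed estimate between good sequences for the same y
  have hmix : ∀ (y : G) (x x' : ℕ → E) (ε ε' : ℕ → ℝ), IsGood J β y x ε →
      IsGood J β y x' ε' → ∀ n m, nb (J (x n) - J (x' m)) ≤ ε n + ε' m := by
    intro y x x' ε ε' hg hg' n m
    set w := x n - x' m with hwdef
    have hw : J (x n) - J (x' m) = J w := (map_sub J _ _).symm
    have h1 : J w = (y - J (x' m)) - (y - J (x n)) := by rw [← hw]; abel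
    have h2 : β (J w) (J w) = β (y - J (x' m)) (J w) - β (y - J (x n)) (J w) := by
      nth_rewrite 1 [h1]
      rw [hsub]
    have ha : |β (y - J (x' m)) (J w)| ≤ ε' m * nb (J w) := hg'.2.2 m w
    have hbb : |β (y - J (x n)) (J w)| ≤ ε n * nb (J w) := hg.2.2 n w
    have h3 : β (J w) (J w) ≤ (ε n + ε' m) * nb (J w) := by
      have l1 := le_abs_self (β (y - J (x' m)) (J w))
      have l2 := neg_abs_le (β (y - J (x n)) (J w))
      nlinarith [h2]
    rw [hw]
    exact hcancel (J w) _ h3 (add_nonneg (hg.1 n) (hg'.1 m))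
  -- Cauchy property
  have hgoodCauchy : ∀ (y : G) (x : ℕ → E) (ε : ℕ → ℝ), IsGood J β y x ε →
      CauchySeq (fun n => T (x n)) := by
    intro y x ε hg
    rw [Metric.cauchySeq_iff']
    intro δ hδ
    have hε := hg.2.1
    rw [Metric.tendsto_atTop] at hε
    obtain ⟨N, hN⟩ := hε (δ/(2*(c+1))) (by positivity)
    refine ⟨N, fun n hn => ?_⟩
    have h1 : dist (T (x n)) (T (x N)) ≤ c * nb (J (x n) - J (x N)) := by
      rw [dist_eq_norm]; exact hTdiff _ _
    have h2 : nb (J (x n) - J (x N)) ≤ ε n + ε N := hmix y x x ε ε hg hg n N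
    have h3 : ε n < δ/(2*(c+1)) := by
      have := hN n hn
      rwa [Real.dist_eq, sub_zero, abs_of_nonneg (hg.1 n)] at this
    have h4 : ε N < δ/(2*(c+1)) := by
      have := hN N le_rfl
      rwa [Real.dist_eq, sub_zero, abs_of_nonneg (hg.1 N)] at this
    have hs : ε n + ε N < δ/(c+1) := by
      have hc1 : (c:ℝ)+1 ≠ 0 := by positivity
      have hh : δ/(2*(c+1)) + δ/(2*(c+1)) = δ/(c+1) := by
        field_simp
        ring
      linarith
    have h5 : c * (δ/(c+1)) < δ := by
      rw [mul_div_assoc', div_lt_iff₀ (by positivity : (0:ℝ) < c+1)]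
      nlinarith
    calc dist (T (x n)) (T (x N)) ≤ c * nb (J (x n) - J (x N)) := h1
      _ ≤ c * (ε n + ε N) := mul_le_mul_of_nonneg_left h2 hc
      _ ≤ c * (δ/(c+1)) := mul_le_mul_of_nonneg_left hs.le hc
      _ < δ := h5
  -- the limit operator
  choose xs εs hGood using hGoodExists
  have hcseq : ∀ y : G, ∃ l, Filter.Tendsto (fun n => T (xs y n)) Filter.atTop (nhds l) :=
    fun y => cauchySeq_tendsto_of_complete (hgoodCauchy y _ _ (hGood y))
  choose L hL using hcseq
  have hUnique : ∀ (y : G) (x : ℕ → E) (ε : ℕ → ℝ) (l : F), IsGood J β y x ε →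
      Filter.Tendsto (fun n => T (x n)) Filter.atTop (nhds l) → L y = l := by
    intro y x ε l hg ht
    refine tendsto_nhds_unique (hL y) ?_
    refine ht.congr_dist ?_
    refine squeeze_zero (g := fun n => c * (ε n + εs y n)) (fun n => dist_nonneg)
      (fun n => ?_) ?_
    · show dist (T (x n)) (T (xs y n)) ≤ c * (ε n + εs y n)
      rw [dist_eq_norm]
      exact (hTdiff _ _).trans (mul_le_mul_of_nonneg_left
        (hmix y x (xs y) ε (εs y) hg (hGood y) n n) hc)
    · have h := ((hg.2.1).add ((hGood y).2.1)).const_mul c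
      simpa using h
  have hadd' : ∀ y y', L (y + y') = L y + L y' := by
    intro y y'
    have hg : IsGood J β (y + y') (fun n => xs y n + xs y' n)
        (fun n => εs y n + εs y' n) := by
      refine ⟨fun n => add_nonneg ((hGood y).1 n) ((hGood y').1 n), ?_, ?_⟩
      · simpa using ((hGood y).2.1.add ((hGood y').2.1))
      · intro n z
        have harg : (y + y') - J (xs y n + xs y' n)
            = (y - J (xs y n)) + (y' - J (xs y' n)) := by rw [map_add]; abel
        rw [harg, hadd]
        calc |β (y - J (xs y n)) (J z) + β (y' - J (xs y' n)) (J z)|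
            ≤ |β (y - J (xs y n)) (J z)| + |β (y' - J (xs y' n)) (J z)| := abs_add_le _ _
          _ ≤ εs y n * Real.sqrt (β (J z) (J z)) + εs y' n * Real.sqrt (β (J z) (J z)) :=
              add_le_add ((hGood y).2.2 n z) ((hGood y').2.2 n z)
          _ = (εs y n + εs y' n) * Real.sqrt (β (J z) (J z)) := by ring
    have ht : Filter.Tendsto (fun n => T (xs y n + xs y' n)) Filter.atTop
        (nhds (L y + L y')) := by
      simp only [map_add]
      exact (hL y).add (hL y')
    exact hUnique _ _ _ _ hg ht
  have hsmul' : ∀ (t : ℝ) (y : G), L (t • y) = t • L y := by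
    intro t y
    have hg : IsGood J β (t • y) (fun n => t • xs y n) (fun n => |t| * εs y n) := by
      refine ⟨fun n => mul_nonneg (abs_nonneg t) ((hGood y).1 n), ?_, ?_⟩
      · simpa using ((hGood y).2.1.const_mul |t|)
      · intro n z
        have harg : t • y - J (t • xs y n) = t • (y - J (xs y n)) := by
          rw [map_smul, smul_sub]
        rw [harg, hsmul, abs_mul]
        have h1 : |β (y - J (xs y n)) (J z)| ≤ εs y n * Real.sqrt (β (J z) (J z)) :=
          (hGood y).2.2 n z
        calc |t| * |β (y - J (xs y n)) (J z)|
            ≤ |t| * (εs y n * Real.sqrt (β (J z) (J z))) :=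
              mul_le_mul_of_nonneg_left h1 (abs_nonneg t)
          _ = |t| * εs y n * Real.sqrt (β (J z) (J z)) := by ring
    have ht : Filter.Tendsto (fun n => T (t • xs y n)) Filter.atTop (nhds (t • L y)) := by
      simp only [map_smul]
      exact (hL y).const_smul t
    exact hUnique _ _ _ _ hg ht
  have hLbound : ∀ y : G, ‖L y‖ ≤ c * nb y := by
    intro y
    have h1 : ∀ n, ‖T (xs y n)‖ ≤ c * (εs y n + nb y) := by
      intro n
      have h2 : β (J (xs y n)) (J (xs y n))
          = β y (J (xs y n)) - β (y - J (xs y n)) (J (xs y n)) := by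
        rw [hsub]; ring
      have h3 : |β (y - J (xs y n)) (J (xs y n))| ≤ εs y n * nb (J (xs y n)) :=
        (hGood y).2.2 n (xs y n)
      have h4 : |β y (J (xs y n))| ≤ nb y * nb (J (xs y n)) := habs_cs _ _
      have h5 : β (J (xs y n)) (J (xs y n)) ≤ (εs y n + nb y) * nb (J (xs y n)) := by
        have l1 := le_abs_self (β y (J (xs y n)))
        have l2 := neg_abs_le (β (y - J (xs y n)) (J (xs y n)))
        nlinarith [h2]
      have h6 := hcancel _ _ h5 (add_nonneg ((hGood y).1 n) (hnb_nonneg y))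
      exact (hTle _).trans (mul_le_mul_of_nonneg_left h6 hc)
    have h7 : Filter.Tendsto (fun n => ‖T (xs y n)‖) Filter.atTop (nhds ‖L y‖) :=
      (hL y).norm
    have h8 : Filter.Tendsto (fun n => c * (εs y n + nb y)) Filter.atTop
        (nhds (c * (0 + nb y))) := ((hGood y).2.1.add_const _).const_mul c
    have h9 := le_of_tendsto_of_tendsto' h7 h8 h1
    rwa [zero_add] at h9
  -- assemble the operator
  set L' : G →ₗ[ℝ] F := { toFun := L, map_add' := hadd', map_smul' := hsmul' } with hL'
  have hbound : ∀ y : G, ‖L' y‖ ≤ c * ‖y‖ := fun y =>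
    (hLbound y).trans (mul_le_mul_of_nonneg_left (hnb_le y) hc)
  refine ⟨LinearMap.mkContinuous L' c hbound, ⟨hc, ?_⟩, ?_⟩
  · intro n y
    have h1 : ∀ i, ‖L (y i)‖^2 ≤ c^2 * β (y i) (y i) := by
      intro i
      have h2 : ‖L (y i)‖^2 ≤ (c * nb (y i))^2 :=
        pow_le_pow_left₀ (norm_nonneg _) (hLbound (y i)) 2
      rw [mul_pow, hnb_sq] at h2
      exact h2
    calc ∑ i, ‖(LinearMap.mkContinuous L' c hbound) (y i)‖^2
        = ∑ i, ‖L (y i)‖^2 := rfl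
      _ ≤ ∑ i, c^2 * β (y i) (y i) := Finset.sum_le_sum fun i _ => h1 i
      _ = c^2 * ∑ i, β (y i) (y i) := (Finset.mul_sum _ _ _).symm
      _ ≤ c^2 * sSup {s : ℝ | ∃ b : StrongDual ℝ G, ‖b‖ ≤ 1 ∧ s = ∑ i, (b (y i))^2} :=
          mul_le_mul_of_nonneg_left (hsum n y) (sq_nonneg c)
  · intro x
    have hg : IsGood J β (J x) (fun _ => x) (fun _ => 0) := by
      refine ⟨fun n => le_rfl, tendsto_const_nhds, fun n z => ?_⟩
      rw [sub_self, hzero]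
      simp
    exact (hUnique (J x) _ _ (T x) hg tendsto_const_nhds).symm

end Core

section Assemble

variable {G : Type*} [NormedAddCommGroup G] [NormedSpace ℝ G]
variable {F : Type*} [NormedAddCommGroup F] [NormedSpace ℝ F]

lemma main_extension [CompleteSpace F] (J : E →L[ℝ] G) (hJ : Isometry J)
    (T : E →L[ℝ] F) (c : ℝ) (hT : TwoSummingWith T c) :
    ∃ Tt : G →L[ℝ] F, TwoSummingWith Tt c ∧ ∀ x : E, T x = Tt (J x) := by
  obtain ⟨φ, hφ_sup, hφ1, hφcone⟩ := exists_phi T c hT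
  choose σ hσ1 hσ2 using fun a : Ball E => exists_section J hJ a
  have hσle : ∀ (a : Ball E) (y : G), |σ a y| ≤ ‖y‖ := by
    intro a y
    calc |σ a y| ≤ ‖σ a‖ * ‖y‖ := (σ a).le_opNorm y
      _ ≤ 1 * ‖y‖ := mul_le_mul_of_nonneg_right (hσ1 a) (norm_nonneg y)
      _ = ‖y‖ := one_mul _
  have hbd : ∀ (y z : G) (a : Ball E), ‖σ a y * σ a z‖ ≤ ‖y‖ * ‖z‖ := by
    intro y z a
    rw [Real.norm_eq_abs, abs_mul]
    exact mul_le_mul (hσle a y) (hσle a z) (abs_nonneg _) (norm_nonneg _)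
  set prodB : G → G → (Ball E →ᵇ ℝ) := fun y z =>
    ofNormedAddCommGroupDiscrete (fun a => σ a y * σ a z) (‖y‖ * ‖z‖) (hbd y z)
    with hprodB
  have hprodB_apply : ∀ (y z : G) (a : Ball E), prodB y z a = σ a y * σ a z :=
    fun y z a => rfl
  set β : G → G → ℝ := fun y z => φ (prodB y z) with hβdef
  have hφ0 : ∀ f : Ball E →ᵇ ℝ, (∀ a, 0 ≤ f a) → 0 ≤ φ f := by
    intro f hf
    have h1 : supF (-f) ≤ 0 := supF_le fun a => by
      have := hf a
      show -f a ≤ 0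
      linarith
    have h2 := (hφ_sup (-f)).trans h1
    rw [map_neg] at h2
    linarith
  have hφconst : ∀ r : ℝ, φ (const _ r) = r := by
    intro r
    have h1 : const (Ball E) r = r • const _ (1:ℝ) := by
      apply BoundedContinuousFunction.ext
      intro a
      show r = r * 1
      ring
    rw [h1, map_smul, hφ1, smul_eq_mul, mul_one]
  refine core J T c hT.1 β ?_ ?_ ?_ ?_ ?_ ?_ ?_
  · -- additivity
    intro y₁ y₂ z
    have h1 : prodB (y₁ + y₂) z = prodB y₁ z + prodB y₂ z := by
      apply BoundedContinuousFunction.ext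
      intro a
      show σ a (y₁ + y₂) * σ a z = σ a y₁ * σ a z + σ a y₂ * σ a z
      rw [map_add]; ring
    show φ (prodB (y₁ + y₂) z) = φ (prodB y₁ z) + φ (prodB y₂ z)
    rw [h1, map_add]
  · -- smul
    intro t y z
    have h1 : prodB (t • y) z = t • prodB y z := by
      apply BoundedContinuousFunction.ext
      intro a
      show σ a (t • y) * σ a z = t * (σ a y * σ a z)
      rw [map_smul, smul_eq_mul]; ring
    show φ (prodB (t • y) z) = t * φ (prodB y z)
    rw [h1, map_smul, smul_eq_mul]
  · -- symmetry
    intro y z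
    have h1 : prodB y z = prodB z y := by
      apply BoundedContinuousFunction.ext
      intro a
      show σ a y * σ a z = σ a z * σ a y
      ring
    show φ (prodB y z) = φ (prodB z y)
    rw [h1]
  · -- positivity
    intro y
    exact hφ0 _ fun a => mul_self_nonneg _
  · -- norm bound
    intro y
    refine (hφ_sup _).trans (supF_le fun a => ?_)
    calc σ a y * σ a y ≤ |σ a y * σ a y| := le_abs_self _
      _ = |σ a y| * |σ a y| := abs_mul _ _
      _ ≤ ‖y‖ * ‖y‖ := mul_le_mul (hσle a y) (hσle a y) (abs_nonneg _) (norm_nonneg _)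
      _ = ‖y‖^2 := (sq ‖y‖).symm
  · -- domination
    intro x
    have h1 := hφcone (![x])
    have h2 : coneFun T c ![x] = c^2 • sqB ![x] - const _ (∑ i, ‖T ((![x]) i)‖^2) := rfl
    rw [h2, map_sub, map_smul, hφconst, smul_eq_mul] at h1
    have h3 : (∑ i, ‖T ((![x]) i)‖^2) = ‖T x‖^2 := by
      rw [Fin.sum_univ_one]
      simp
    rw [h3] at h1
    have h4 : sqB ![x] = prodB (J x) (J x) := by
      apply BoundedContinuousFunction.ext
      intro a
      show ∑ i, (a.1 ((![x]) i))^2 = σ a (J x) * σ a (J x)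
      rw [Fin.sum_univ_one, hσ2]
      simp [sq]
    rw [h4] at h1
    linarith
  · -- weak-sum bound
    intro n y
    have h1 : (∑ i, β (y i) (y i)) = φ (∑ i, prodB (y i) (y i)) := by
      rw [map_sum]
    have hbddS : BddAbove {s : ℝ | ∃ b : StrongDual ℝ G, ‖b‖ ≤ 1 ∧ s = ∑ i, (b (y i))^2} := by
      refine ⟨∑ i, ‖y i‖^2, ?_⟩
      rintro s ⟨b, hb, rfl⟩
      refine Finset.sum_le_sum fun i _ => ?_
      have h2 : |b (y i)| ≤ ‖y i‖ := by
        calc |b (y i)| ≤ ‖b‖ * ‖y i‖ := b.le_opNorm _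
          _ ≤ 1 * ‖y i‖ := mul_le_mul_of_nonneg_right hb (norm_nonneg _)
          _ = ‖y i‖ := one_mul _
      calc (b (y i))^2 = |b (y i)|^2 := (sq_abs _).symm
        _ ≤ ‖y i‖^2 := pow_le_pow_left₀ (abs_nonneg _) h2 2
    have h2 : supF (∑ i, prodB (y i) (y i))
        ≤ sSup {s : ℝ | ∃ b : StrongDual ℝ G, ‖b‖ ≤ 1 ∧ s = ∑ i, (b (y i))^2} := by
      refine supF_le fun a => ?_
      refine le_csSup hbddS ⟨σ a, hσ1 a, ?_⟩
      have h3 : (∑ i, prodB (y i) (y i)) a = ∑ i, (σ a (y i)) * (σ a (y i)) := by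
        have h4 := BoundedContinuousFunction.coe_sum Finset.univ (fun i => prodB (y i) (y i))
        calc (∑ i, prodB (y i) (y i)) a
            = (∑ i, ⇑(prodB (y i) (y i))) a := by rw [h4]
          _ = ∑ i, (σ a (y i)) * (σ a (y i)) := by
              rw [Finset.sum_apply]
              rfl
      rw [h3]
      refine Finset.sum_congr rfl fun i _ => ?_
      rw [sq]
    rw [h1]
    exact (hφ_sup _).trans h2

end Assemble

end TwoSummingAux

/-- the ideal of absolutely 2-summing operators has the `P₂`-extension
property. -/
theorem twoSumming_extension_property
    (E G F : Type*) [NormedAddCommGroup E] [NormedSpace ℝ E] [CompleteSpace E]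
    [NormedAddCommGroup G] [NormedSpace ℝ G] [CompleteSpace G]
    [NormedAddCommGroup F] [NormedSpace ℝ F] [CompleteSpace F]
    (ε : ℝ) (hε : 0 < ε) (J : E →L[ℝ] G) (hJ : Isometry J)
    (T : E →L[ℝ] F) (hT : AbsTwoSumming T) :
    ∃ Tt : G →L[ℝ] F, AbsTwoSumming Tt ∧ (∀ x : E, T x = Tt (J x)) ∧
      pi2 Tt ≤ (1 + ε) * pi2 T := by
  classical
  obtain ⟨c₀, hc₀⟩ := hT
  have hne : {c : ℝ | TwoSummingWith T c}.Nonempty := ⟨c₀, hc₀⟩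
  have hbdd : BddBelow {c : ℝ | TwoSummingWith T c} := ⟨0, fun c hc => hc.1⟩
  have hpi2_nonneg : 0 ≤ pi2 T := le_csInf hne fun c hc => hc.1
  rcases eq_or_lt_of_le hpi2_nonneg with h0 | h0
  · -- degenerate case: `π₂ T = 0`, hence `T = 0`.
    have hT0 : ∀ x : E, T x = 0 := by
      intro x
      have hnx : ∀ δ : ℝ, 0 < δ → ‖T x‖ ≤ δ * ‖x‖ := by
        intro δ hδ
        obtain ⟨c, hc, hlt⟩ := Real.lt_sInf_add_pos hne hδ
        have hlt' : c < δ := by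
          have : sInf {c : ℝ | TwoSummingWith T c} = pi2 T := rfl
          rw [this, ← h0, zero_add] at hlt
          exact hlt
        have h1 := hc.2 1 ![x]
        have hsup_le : sSup {s : ℝ | ∃ a : StrongDual ℝ E, ‖a‖ ≤ 1 ∧
            s = ∑ i : Fin 1, (a ((![x]) i))^2} ≤ ‖x‖^2 := by
          refine csSup_le ⟨0, 0, by simp, by simp⟩ ?_
          rintro s ⟨a, ha, rfl⟩
          rw [Fin.sum_univ_one]
          have h2 : |a ((![x]) 0)| ≤ ‖x‖ := by
            calc |a ((![x]) 0)| ≤ ‖a‖ * ‖(![x]) 0‖ := a.le_opNorm _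
              _ ≤ 1 * ‖(![x]) 0‖ := mul_le_mul_of_nonneg_right ha (norm_nonneg _)
              _ = ‖x‖ := by simp
          calc (a ((![x]) 0))^2 = |a ((![x]) 0)|^2 := (sq_abs _).symm
            _ ≤ ‖x‖^2 := pow_le_pow_left₀ (abs_nonneg _) h2 2
        have h3 : (∑ i : Fin 1, ‖T ((![x]) i)‖^2) = ‖T x‖^2 := by
          rw [Fin.sum_univ_one]; simp
        rw [h3] at h1
        have h4 : ‖T x‖^2 ≤ c^2 * ‖x‖^2 :=
          h1.trans (mul_le_mul_of_nonneg_left hsup_le (sq_nonneg c))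
        have h5 : ‖T x‖ ≤ c * ‖x‖ := by
          have h6 := Real.sqrt_le_sqrt h4
          rwa [Real.sqrt_sq (norm_nonneg _), Real.sqrt_mul (sq_nonneg c),
            Real.sqrt_sq hc.1, Real.sqrt_sq (norm_nonneg x)] at h6
        exact h5.trans (mul_le_mul_of_nonneg_right hlt'.le (norm_nonneg x))
      have h7 : ‖T x‖ ≤ 0 := by
        refine le_of_forall_pos_le_add fun δ hδ => ?_
        have h8 := hnx (δ/(‖x‖+1)) (by positivity)
        have h9 : δ/(‖x‖+1) * ‖x‖ ≤ δ := by
          rw [div_mul_eq_mul_div, div_le_iff₀ (by positivity : (0:ℝ) < ‖x‖+1)]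
          nlinarith [norm_nonneg x]
        linarith
      simpa using norm_le_zero_iff.mp h7
    have hmem0 : TwoSummingWith (0 : G →L[ℝ] F) 0 := by
      refine ⟨le_rfl, fun n x => ?_⟩
      simp
    refine ⟨0, ⟨0, hmem0⟩, fun x => by simp [hT0 x], ?_⟩
    have h10 : pi2 (0 : G →L[ℝ] F) ≤ 0 := csInf_le ⟨0, fun c hc => hc.1⟩ hmem0
    calc pi2 (0 : G →L[ℝ] F) ≤ 0 := h10
      _ = (1 + ε) * pi2 T := by rw [← h0]; ring
  · -- main case: `π₂ T > 0`.
    obtain ⟨c, hc, hlt⟩ := Real.lt_sInf_add_pos hne (mul_pos hε h0)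
    obtain ⟨Tt, hTt, hfact⟩ := TwoSummingAux.main_extension J hJ T c hc
    refine ⟨Tt, ⟨c, hTt⟩, hfact, ?_⟩
    have h1 : pi2 Tt ≤ c := csInf_le ⟨0, fun c' hc' => hc'.1⟩ hTt
    have h2 : sInf {c : ℝ | TwoSummingWith T c} = pi2 T := rfl
    rw [h2] at hlt
    nlinarith [h1, hlt]
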